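/- Let n₁, n₂, n₃ : ℕ, let P be a symmetric positive definite real matrix of size (n₁+n₂+n₃)×(n₁+n₂+n₃), let m ∈ ℝ^{n₁+n₂+n₃}, and define f : ℝ^{n₁} × ℝ^{n₂} × ℝ^{n₃} → ℝ by f(x,y,w) = exp(−(1/2)·((x,y,w)−m)ᵀ P ((x,y,w)−m)). Then there exists a constant C > 0, independent of y, such that for every y ∈ ℝ^{n₂}: ∫_{ℝ^{n₃}} ( sup_{x ∈ ℝ^{n₁}} f(x,y,w) ) dw = C · ∫_{ℝ^{n₃}} ∫_{ℝ^{n₁}} f(x,y,w) dx dw. -/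

import Mathlib

open Matrix MeasureTheory Real

lemma quad_continuous {n : ℕ} (A : Matrix (Fin n) (Fin n) ℝ) :
    Continuous fun x : Fin n → ℝ => x ⬝ᵥ A *ᵥ x := by
  simp only [dotProduct, mulVec]
  exact continuous_finset_sum _ fun i _ =>
    (continuous_apply i).mul (continuous_finset_sum _ fun j _ =>
      continuous_const.mul (continuous_apply j))

lemma exists_quad_lower {n : ℕ} {A : Matrix (Fin n) (Fin n) ℝ} (hA : A.PosDef) :
    ∃ ε : ℝ, 0 < ε ∧ ∀ x : Fin n → ℝ, ε * ∑ i, x i ^ 2 ≤ x ⬝ᵥ A *ᵥ x := by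
  rcases Nat.eq_zero_or_pos n with hn | hn
  · subst hn
    exact ⟨1, one_pos, fun x => by simp [dotProduct]⟩
  haveI : Nonempty (Fin n) := ⟨⟨0, hn⟩⟩
  obtain ⟨z, hz, hmin⟩ := (isCompact_sphere (0 : Fin n → ℝ) 1).exists_isMinOn
    (NormedSpace.sphere_nonempty.mpr zero_le_one) (quad_continuous A).continuousOn
  have hz1 : ‖z‖ = 1 := by simpa using hz
  have hz0 : z ≠ 0 := by intro h; rw [h] at hz1; simp at hz1
  have hε₀ : 0 < z ⬝ᵥ A *ᵥ z := by
    have := hA.dotProduct_mulVec_pos hz0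
    simpa using this
  refine ⟨(z ⬝ᵥ A *ᵥ z) / n, by positivity, fun x => ?_⟩
  rcases eq_or_ne x 0 with rfl | hx
  · simp
  have hxn : (0:ℝ) < ‖x‖ := norm_pos_iff.mpr hx
  have hsphere : ‖x‖⁻¹ • x ∈ Metric.sphere (0 : Fin n → ℝ) 1 := by
    simp [norm_smul, abs_of_pos (inv_pos.mpr hxn), inv_mul_cancel₀ hxn.ne']
  have hq : x ⬝ᵥ A *ᵥ x = ‖x‖^2 * ((‖x‖⁻¹ • x) ⬝ᵥ A *ᵥ (‖x‖⁻¹ • x)) := by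
    simp only [mulVec_smul, smul_dotProduct, dotProduct_smul, smul_eq_mul]
    field_simp
  have h1 : z ⬝ᵥ A *ᵥ z ≤ (‖x‖⁻¹ • x) ⬝ᵥ A *ᵥ (‖x‖⁻¹ • x) := hmin hsphere
  have hsum : ∑ i, x i ^ 2 ≤ (n:ℝ) * ‖x‖^2 := by
    calc ∑ i, x i ^ 2 ≤ ∑ _i : Fin n, ‖x‖^2 := by
          refine Finset.sum_le_sum fun i _ => ?_
          have : |x i| ≤ ‖x‖ := by
            simpa [Real.norm_eq_abs] using norm_le_pi_norm x i
          calc x i ^ 2 = |x i|^2 := (sq_abs _).symm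
            _ ≤ ‖x‖^2 := by gcongr
      _ = (n:ℝ) * ‖x‖^2 := by simp [mul_comm]
  calc (z ⬝ᵥ A *ᵥ z) / n * ∑ i, x i ^ 2
      ≤ (z ⬝ᵥ A *ᵥ z) / n * ((n:ℝ) * ‖x‖^2) := by
        refine mul_le_mul_of_nonneg_left hsum (by positivity)
    _ = (z ⬝ᵥ A *ᵥ z) * ‖x‖^2 := by field_simp
    _ ≤ ‖x‖^2 * ((‖x‖⁻¹ • x) ⬝ᵥ A *ᵥ (‖x‖⁻¹ • x)) := by
        rw [mul_comm]; exact mul_le_mul_of_nonneg_left h1 (by positivity)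
    _ = x ⬝ᵥ A *ᵥ x := hq.symm

lemma integrable_exp_neg_quad {n : ℕ} {A : Matrix (Fin n) (Fin n) ℝ} (hA : A.PosDef) :
    Integrable (fun x : Fin n → ℝ => rexp (-(1/2) * (x ⬝ᵥ A *ᵥ x))) := by
  obtain ⟨ε, hε, hbound⟩ := exists_quad_lower hA
  have hmaj : Integrable (fun x : Fin n → ℝ => rexp (-(ε/2) * ∑ i, x i ^ 2)) := by
    have h := (GaussianFourier.integrable_cexp_neg_mul_sum_add (b := ((ε/2 : ℝ) : ℂ))
      (by simpa using half_pos hε) (fun _ : Fin n => (0:ℂ))).re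
    refine h.congr (Filter.Eventually.of_forall fun x => ?_)
    have hc : (-(((ε/2 : ℝ)) : ℂ) * ∑ i, (x i : ℂ)^2 + ∑ i, (0:ℂ) * (x i : ℂ))
        = ((-(ε/2) * ∑ i, x i ^ 2 : ℝ) : ℂ) := by push_cast; simp
    simp only [hc, RCLike.re_to_complex, Complex.exp_ofReal_re]
  refine hmaj.mono' ?_ (Filter.Eventually.of_forall fun x => ?_)
  · exact (Real.continuous_exp.comp
      (continuous_const.mul (quad_continuous A))).aestronglyMeasurable
  · rw [Real.norm_eq_abs, abs_of_pos (Real.exp_pos _)]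
    apply Real.exp_le_exp.mpr
    have := hbound x
    nlinarith

lemma integral_exp_neg_quad_pos {n : ℕ} {A : Matrix (Fin n) (Fin n) ℝ} (hA : A.PosDef) :
    0 < ∫ x : Fin n → ℝ, rexp (-(1/2) * (x ⬝ᵥ A *ᵥ x)) := by
  exact integral_exp_pos (integrable_exp_neg_quad hA)

lemma iSup_exp_shift {n : ℕ} {A : Matrix (Fin n) (Fin n) ℝ} (hA : A.PosDef)
    (t : Fin n → ℝ) (s : ℝ) :
    ⨆ x : Fin n → ℝ, rexp (-(1/2) * ((x - t) ⬝ᵥ A *ᵥ (x - t) + s)) = rexp (-(1/2) * s) := by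
  have hb : ∀ x : Fin n → ℝ,
      rexp (-(1/2) * ((x - t) ⬝ᵥ A *ᵥ (x - t) + s)) ≤ rexp (-(1/2) * s) := by
    intro x
    apply Real.exp_le_exp.mpr
    have h0 : 0 ≤ (x - t) ⬝ᵥ A *ᵥ (x - t) := by
      have := hA.posSemidef.dotProduct_mulVec_nonneg (x - t)
      simpa using this
    nlinarith
  apply le_antisymm
  · exact ciSup_le hb
  · have := le_ciSup (f := fun x : Fin n → ℝ =>
        rexp (-(1/2) * ((x - t) ⬝ᵥ A *ᵥ (x - t) + s)))
      ⟨rexp (-(1/2) * s), by rintro _ ⟨x, rfl⟩; exact hb x⟩ t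
    simpa using this

lemma integral_exp_shift {n : ℕ} (A : Matrix (Fin n) (Fin n) ℝ) (t : Fin n → ℝ) (s : ℝ) :
    ∫ x : Fin n → ℝ, rexp (-(1/2) * ((x - t) ⬝ᵥ A *ᵥ (x - t) + s))
      = rexp (-(1/2) * s) * ∫ x : Fin n → ℝ, rexp (-(1/2) * (x ⬝ᵥ A *ᵥ x)) := by
  have h1 : ∀ x : Fin n → ℝ, rexp (-(1/2) * ((x - t) ⬝ᵥ A *ᵥ (x - t) + s))
      = rexp (-(1/2) * s) * rexp (-(1/2) * ((x - t) ⬝ᵥ A *ᵥ (x - t))) := by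
    intro x; rw [← Real.exp_add]; congr 1; ring
  simp_rw [h1]
  rw [MeasureTheory.integral_const_mul]
  congr 1
  exact integral_sub_right_eq_self (fun x : Fin n → ℝ => rexp (-(1/2) * (x ⬝ᵥ A *ᵥ x))) t

lemma key_decomp {m' n' : Type*} [Fintype m'] [DecidableEq m'] [Fintype n']
    (P : Matrix (m' ⊕ n') (m' ⊕ n') ℝ) (hP : P.PosDef) :
    ∃ A : Matrix m' m' ℝ, A.PosDef ∧ ∃ T : Matrix m' n' ℝ, ∃ S : Matrix n' n' ℝ,
      ∀ (a : m' → ℝ) (b : n' → ℝ),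
        Sum.elim a b ⬝ᵥ P *ᵥ Sum.elim a b
          = (a + T *ᵥ b) ⬝ᵥ A *ᵥ (a + T *ᵥ b) + b ⬝ᵥ S *ᵥ b := by
  set A := P.toBlocks₁₁ with hAdef
  set B := P.toBlocks₁₂ with hBdef
  set D := P.toBlocks₂₂ with hDdef
  have hBH : P.toBlocks₂₁ = Bᴴ := by
    ext i j
    simpa [hBdef, Matrix.conjTranspose_apply, Matrix.toBlocks₂₁, Matrix.toBlocks₁₂] using
      (congrFun (congrFun hP.1 (Sum.inr i)) (Sum.inl j)).symm
  have hPB : P = Matrix.fromBlocks A B Bᴴ D := by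
    rw [← hBH, hAdef, hBdef, hDdef, Matrix.fromBlocks_toBlocks]
  have hA : A.PosDef := by
    rw [Matrix.posDef_iff_dotProduct_mulVec]
    constructor
    · ext i j
      simpa [hAdef, Matrix.conjTranspose_apply, Matrix.toBlocks₁₁] using
        congrFun (congrFun hP.1 (Sum.inl i)) (Sum.inl j)
    · intro x hx
      have hx' : Sum.elim x (0 : n' → ℝ) ≠ 0 := by
        intro h
        apply hx
        funext i
        simpa using congrFun h (Sum.inl i)
      have h2 := hP.dotProduct_mulVec_pos hx'
      rw [hPB] at h2
      simpa [Matrix.fromBlocks_mulVec, sumElim_dotProduct_sumElim] using h2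
  haveI : Invertible A := A.invertibleOfIsUnitDet hA.det_pos.ne'.isUnit
  refine ⟨A, hA, A⁻¹ * B, D - Bᴴ * A⁻¹ * B, fun a b => ?_⟩
  have hkey := Matrix.schur_complement_eq₁₁ (α := ℝ) B D a b hA.1
  simp only [star_trivial] at hkey
  calc Sum.elim a b ⬝ᵥ P *ᵥ Sum.elim a b
      = Sum.elim a b ᵥ* Matrix.fromBlocks A B Bᴴ D ⬝ᵥ Sum.elim a b := by
        rw [hPB, Matrix.dotProduct_mulVec]
    _ = (a + (A⁻¹ * B) *ᵥ b) ᵥ* A ⬝ᵥ (a + (A⁻¹ * B) *ᵥ b)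
          + b ᵥ* (D - Bᴴ * A⁻¹ * B) ⬝ᵥ b := hkey
    _ = (a + (A⁻¹ * B) *ᵥ b) ⬝ᵥ A *ᵥ (a + (A⁻¹ * B) *ᵥ b)
          + b ⬝ᵥ (D - Bᴴ * A⁻¹ * B) *ᵥ b := by
        rw [Matrix.dotProduct_mulVec, Matrix.dotProduct_mulVec]

/-- Interchange of pointwise maximization (over `x`) and integration (over `w`) for an
unnormalized Gaussian in `(x,y,w)`, up to a constant `C > 0` independent of `y`. -/
theorem gaussian_integral_max_eq_const_mul_integral_integral (n₁ n₂ n₃ : ℕ)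
    (P : Matrix (Fin n₁ ⊕ (Fin n₂ ⊕ Fin n₃)) (Fin n₁ ⊕ (Fin n₂ ⊕ Fin n₃)) ℝ)
    (hP : P.PosDef) (m : Fin n₁ ⊕ (Fin n₂ ⊕ Fin n₃) → ℝ) :
    ∃ C : ℝ, 0 < C ∧ ∀ y : Fin n₂ → ℝ,
      (∫ w : Fin n₃ → ℝ, ⨆ x : Fin n₁ → ℝ,
          Real.exp (-(1/2) * ((Sum.elim x (Sum.elim y w) - m) ⬝ᵥ P *ᵥ
            (Sum.elim x (Sum.elim y w) - m)))) =
        C * ∫ w : Fin n₃ → ℝ, ∫ x : Fin n₁ → ℝ,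
          Real.exp (-(1/2) * ((Sum.elim x (Sum.elim y w) - m) ⬝ᵥ P *ᵥ
            (Sum.elim x (Sum.elim y w) - m))) := by
  obtain ⟨A, hA, T, S, hdecomp⟩ := key_decomp P hP
  have hc₀ : 0 < ∫ x : Fin n₁ → ℝ, rexp (-(1/2) * (x ⬝ᵥ A *ᵥ x)) :=
    integral_exp_neg_quad_pos hA
  set c₀ := ∫ x : Fin n₁ → ℝ, rexp (-(1/2) * (x ⬝ᵥ A *ᵥ x)) with hc₀def
  refine ⟨c₀⁻¹, inv_pos.mpr hc₀, fun y => ?_⟩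
  set t : (Fin n₃ → ℝ) → Fin n₁ → ℝ :=
    fun w => (m ∘ Sum.inl) - T *ᵥ (Sum.elim y w - m ∘ Sum.inr) with htdef
  set s : (Fin n₃ → ℝ) → ℝ :=
    fun w => (Sum.elim y w - m ∘ Sum.inr) ⬝ᵥ S *ᵥ (Sum.elim y w - m ∘ Sum.inr) with hsdef
  have hpt : ∀ (w : Fin n₃ → ℝ) (x : Fin n₁ → ℝ),
      (Sum.elim x (Sum.elim y w) - m) ⬝ᵥ P *ᵥ (Sum.elim x (Sum.elim y w) - m)
        = (x - t w) ⬝ᵥ A *ᵥ (x - t w) + s w := by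
    intro w x
    have hsplit : Sum.elim x (Sum.elim y w) - m
        = Sum.elim (x - m ∘ Sum.inl) (Sum.elim y w - m ∘ Sum.inr) := by
      funext i; cases i <;> simp
    have hxt : x - t w = (x - m ∘ Sum.inl) + T *ᵥ (Sum.elim y w - m ∘ Sum.inr) := by
      simp only [htdef]; rw [sub_sub_eq_add_sub, add_sub_right_comm]
    rw [hsplit, hdecomp, hxt]
  calc (∫ w : Fin n₃ → ℝ, ⨆ x : Fin n₁ → ℝ,
        rexp (-(1/2) * ((Sum.elim x (Sum.elim y w) - m) ⬝ᵥ P *ᵥ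
          (Sum.elim x (Sum.elim y w) - m))))
      = ∫ w : Fin n₃ → ℝ, rexp (-(1/2) * s w) := by
        refine integral_congr_ae (Filter.Eventually.of_forall fun w => ?_)
        simp_rw [hpt w]
        exact iSup_exp_shift hA (t w) (s w)
    _ = c₀⁻¹ * ∫ w : Fin n₃ → ℝ, (rexp (-(1/2) * s w) * c₀) := by
        rw [MeasureTheory.integral_mul_const, mul_comm _ c₀, ← mul_assoc,
          inv_mul_cancel₀ hc₀.ne', one_mul]
    _ = c₀⁻¹ * ∫ w : Fin n₃ → ℝ, ∫ x : Fin n₁ → ℝ,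
          rexp (-(1/2) * ((Sum.elim x (Sum.elim y w) - m) ⬝ᵥ P *ᵥ
            (Sum.elim x (Sum.elim y w) - m))) := by
        congr 1
        refine integral_congr_ae (Filter.Eventually.of_forall fun w => ?_)
        simp_rw [hpt w]
        exact (integral_exp_shift A (t w) (s w)).symm
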